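/- Let α be a real quadratic irrational. Then the digits of the period of the continued fraction expansion of α are, as a cyclic word, invariant under the action of PGL₂(ℤ): for any γ ∈ PGL₂(ℤ), the Gauss-map period P_{γα} equals P_α (as subsets of [0,1]), and in particular the period lengths agree. -/

import Mathlib

/-- The Gauss map `y ↦ {1/y}`. -/
noncomputable def gaussMap : ℝ → ℝ := fun y => Int.fract y⁻¹

/-- The periodic cycle `P_α` of `α mod 1` under the Gauss map: the set of points visited
infinitely often by the forward orbit. -/
noncomputable def gaussPeriod (α : ℝ) : Set ℝ :=
  {y : ℝ | {n : ℕ | gaussMap^[n] (Int.fract α) = y}.Infinite}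

/-- Tail equivalence: the Gauss-map orbits of `fract α` and `fract β` eventually meet. -/
def TailEq (α β : ℝ) : Prop :=
  ∃ m n : ℕ, gaussMap^[m] (Int.fract α) = gaussMap^[n] (Int.fract β)

lemma tailEq_symm {α β : ℝ} (h : TailEq α β) : TailEq β α := by
  obtain ⟨m, n, h⟩ := h; exact ⟨n, m, h.symm⟩

lemma tailEq_trans {α β γ : ℝ} (h1 : TailEq α β) (h2 : TailEq β γ) : TailEq α γ := by
  obtain ⟨m, n, h1⟩ := h1
  obtain ⟨k, l, h2⟩ := h2
  refine ⟨k + m, n + l, ?_⟩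
  have e1 : gaussMap^[k] (gaussMap^[m] (Int.fract α))
      = gaussMap^[k] (gaussMap^[n] (Int.fract β)) := by rw [h1]
  have e2 : gaussMap^[n] (gaussMap^[k] (Int.fract β))
      = gaussMap^[n] (gaussMap^[l] (Int.fract γ)) := by rw [h2]
  rw [← Function.iterate_add_apply, ← Function.iterate_add_apply] at e1 e2
  rw [e1]
  rw [Nat.add_comm n k] at e2
  exact e2

lemma tailEq_of_fract_eq {α β : ℝ} (h : Int.fract α = Int.fract β) : TailEq α β :=
  ⟨0, 0, by simp only [Function.iterate_zero, id_eq]; exact h⟩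

lemma tailEq_add_int (α : ℝ) (k : ℤ) : TailEq (α + k) α :=
  tailEq_of_fract_eq (Int.fract_add_intCast α k)

/-- Irrationality of the fractional part. -/
lemma irrational_fract {α : ℝ} (h : Irrational α) : Irrational (Int.fract α) := by
  unfold Int.fract
  exact h.sub_intCast ⌊α⌋

lemma fract_pos {α : ℝ} (h : Irrational α) : 0 < Int.fract α := by
  rcases lt_or_eq_of_le (Int.fract_nonneg α) with h' | h'
  · exact h'
  · exact absurd h'.symm ((irrational_fract h).ne_zero)

/-- The key computation: for `0 < y < 1/2`, `G²(1-y) = G(y)`. -/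
lemma key_neg {y : ℝ} (h0 : 0 < y) (h2 : y < 1/2) :
    gaussMap^[2] (1 - y) = gaussMap y := by
  have hy1 : y < 1 := by linarith
  have h1y : (0:ℝ) < 1 - y := by linarith
  have hinv1 : (1:ℝ) ≤ (1 - y)⁻¹ := by
    rw [le_inv_comm₀ one_pos h1y]; simp; linarith
  have hinv2 : (1 - y)⁻¹ < 2 := by
    rw [inv_lt_iff_one_lt_mul₀ h1y]; linarith
  have step1 : gaussMap (1 - y) = y / (1 - y) := by
    show Int.fract (1 - y)⁻¹ = y / (1 - y)
    have e1 : Int.fract (1 - y)⁻¹ = (1 - y)⁻¹ - 1 := by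
      have e0 := Int.fract_sub_intCast ((1 - y)⁻¹) 1
      rw [← e0]
      push_cast
      rw [Int.fract_eq_self]
      constructor <;> linarith
    rw [e1]
    field_simp
    ring
  have step2 : gaussMap (y / (1 - y)) = gaussMap y := by
    show Int.fract (y / (1 - y))⁻¹ = Int.fract y⁻¹
    rw [inv_div]
    have e1 : (1 - y) / y = y⁻¹ - 1 := by field_simp
    rw [e1]
    have e2 := Int.fract_sub_intCast (y⁻¹) 1
    push_cast at e2
    exact e2
  show gaussMap (gaussMap (1 - y)) = gaussMap y
  rw [step1, step2]

lemma tailEq_neg (α : ℝ) (h : Irrational α) : TailEq (-α) α := by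
  set y := Int.fract α with hy
  have hy0 : 0 < y := fract_pos h
  have hy1 : y < 1 := Int.fract_lt_one α
  have hfn : Int.fract (-α) = 1 - y := Int.fract_neg (ne_of_gt hy0)
  have hirr : Irrational y := irrational_fract h
  have hhalf : y ≠ 1/2 := by
    intro he; exact hirr (by rw [he]; exact ⟨1/2, by norm_num⟩)
  rcases lt_or_gt_of_ne hhalf with hlt | hgt
  · exact ⟨2, 1, by rw [hfn]; exact key_neg hy0 hlt⟩
  · have h0 : 0 < 1 - y := by linarith
    have h2 : 1 - y < 1/2 := by linarith
    have hk := key_neg h0 h2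
    rw [show (1 - (1-y)) = y by ring] at hk
    exact ⟨1, 2, by rw [hfn]; exact hk.symm⟩

lemma tailEq_inv_pos {α : ℝ} (h : Irrational α) (hpos : 0 < α) : TailEq α⁻¹ α := by
  have hne1 : α ≠ 1 := h.ne_one
  rcases lt_or_gt_of_ne hne1 with hlt | hgt
  · have hf : Int.fract α = α := Int.fract_eq_self.mpr ⟨le_of_lt hpos, hlt⟩
    exact ⟨0, 1, by simp only [Function.iterate_one, Function.iterate_zero, id_eq, hf]; rfl⟩
  · have hpos' : 0 < α⁻¹ := inv_pos.mpr hpos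
    have hlt' : α⁻¹ < 1 := inv_lt_one_of_one_lt₀ hgt
    have hf : Int.fract α⁻¹ = α⁻¹ := Int.fract_eq_self.mpr ⟨le_of_lt hpos', hlt'⟩
    refine ⟨1, 0, ?_⟩
    simp only [Function.iterate_one, Function.iterate_zero, id_eq, hf]
    show Int.fract α⁻¹⁻¹ = Int.fract α
    rw [inv_inv]

lemma tailEq_inv (α : ℝ) (h : Irrational α) : TailEq α⁻¹ α := by
  rcases lt_or_gt_of_ne h.ne_zero with hneg | hpos
  · have hna : Irrational (-α) := h.neg
    have hpos' : 0 < -α := by linarith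
    have t1 : TailEq (-α)⁻¹ (-α) := tailEq_inv_pos hna hpos'
    have t2 : TailEq (-α) α := tailEq_neg α h
    have t3 : TailEq (-(α⁻¹)) α := by
      rw [show -(α⁻¹) = (-α)⁻¹ by rw [inv_neg]]
      exact tailEq_trans t1 t2
    exact tailEq_trans (tailEq_symm (tailEq_neg α⁻¹ h.inv)) t3
  · exact tailEq_inv_pos h hpos

lemma moebius_denom_ne_zero {α : ℝ} (h : Irrational α) {c d : ℤ} (hcd : ¬(c = 0 ∧ d = 0)) :
    (c : ℝ) * α + d ≠ 0 := by
  intro heq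
  by_cases hc : c = 0
  · subst hc
    have : (d : ℝ) = 0 := by simpa using heq
    exact hcd ⟨rfl, by exact_mod_cast this⟩
  · have hcR : (c : ℝ) ≠ 0 := Int.cast_ne_zero.mpr hc
    apply h
    refine ⟨(-d : ℤ) / (c : ℤ), ?_⟩
    rw [Rat.cast_div]
    push_cast
    field_simp
    linarith

lemma moebius_irrational {α : ℝ} (h : Irrational α) {a b c d : ℤ}
    (hdet : a * d - b * c ≠ 0) :
    Irrational (((a:ℝ) * α + b) / ((c:ℝ) * α + d)) := by
  have hcd : ¬(c = 0 ∧ d = 0) := by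
    rintro ⟨rfl, rfl⟩; simp at hdet
  have hden : (c : ℝ) * α + d ≠ 0 := moebius_denom_ne_zero h hcd
  rintro ⟨q, hq⟩
  have heq : (a:ℝ) * α + b = q * ((c:ℝ) * α + d) := by
    rw [eq_comm, div_eq_iff hden] at hq
    linarith [hq]
  have heq2 : ((a:ℝ) - q * c) * α = q * d - b := by ring_nf; ring_nf at heq; linarith
  by_cases hz : (a:ℝ) - q * c = 0
  · have hb : (b:ℝ) = q * d := by
      rw [hz, zero_mul] at heq2; linarith
    have haa : (a:ℝ) = q * c := by linarith
    have hzero : ((a * d - b * c : ℤ) : ℝ) = 0 := by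
      push_cast
      rw [haa, hb]; ring
    exact hdet (by exact_mod_cast hzero)
  · apply h
    refine ⟨(q * d - b) / (a - q * c), ?_⟩
    rw [Rat.cast_div]
    push_cast
    rw [div_eq_iff hz]
    linear_combination -heq2

/-- Main induction (Serret): any `GL₂(ℤ)` Möbius image of an irrational is tail-equivalent. -/
lemma tailEq_moebius : ∀ N : ℕ, ∀ c : ℤ, c.natAbs ≤ N → ∀ a b d : ℤ,
    (a * d - b * c = 1 ∨ a * d - b * c = -1) → ∀ α : ℝ, Irrational α →
    TailEq (((a:ℝ) * α + b) / ((c:ℝ) * α + d)) α := by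
  have base : ∀ a b d : ℤ, (a * d = 1 ∨ a * d = -1) → ∀ α : ℝ, Irrational α →
      TailEq (((a:ℝ) * α + b) / ((0:ℝ) * α + d)) α := by
    intro a b d hdet α hirr
    have ha : a = 1 ∧ d = 1 ∨ a = -1 ∧ d = -1 ∨ a = 1 ∧ d = -1 ∨ a = -1 ∧ d = 1 := by
      rcases hdet with h1 | h1
      · have := Int.eq_one_or_neg_one_of_mul_eq_one' h1
        tauto
      · have h2 : a * (-d) = 1 := by linarith
        have := Int.eq_one_or_neg_one_of_mul_eq_one' h2
        omega
    rcases ha with ⟨rfl, rfl⟩ | ⟨rfl, rfl⟩ | ⟨rfl, rfl⟩ | ⟨rfl, rfl⟩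
    · have he : (((1:ℤ):ℝ) * α + (b:ℝ)) / ((0:ℝ) * α + ((1:ℤ):ℝ)) = α + (b : ℤ) := by
        push_cast; field_simp; ring
      rw [he]; exact tailEq_add_int α b
    · have he : (((-1:ℤ):ℝ) * α + (b:ℝ)) / ((0:ℝ) * α + ((-1:ℤ):ℝ)) = α + (-b : ℤ) := by
        push_cast; field_simp; try ring
      rw [he]; exact tailEq_add_int α (-b)
    · have he : (((1:ℤ):ℝ) * α + (b:ℝ)) / ((0:ℝ) * α + ((-1:ℤ):ℝ)) = (-α) + (-b : ℤ) := by
        push_cast; field_simp; try ring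
      rw [he]; exact tailEq_trans (tailEq_add_int (-α) (-b)) (tailEq_neg α hirr)
    · have he : (((-1:ℤ):ℝ) * α + (b:ℝ)) / ((0:ℝ) * α + ((1:ℤ):ℝ)) = (-α) + (b : ℤ) := by
        push_cast; field_simp; try ring
      rw [he]; exact tailEq_trans (tailEq_add_int (-α) b) (tailEq_neg α hirr)
  intro N
  induction N with
  | zero =>
    intro c hc a b d hdet α hirr
    have hc0 : c = 0 := by omega
    subst hc0
    simp only [mul_zero, sub_zero] at hdet
    have := base a b d hdet α hirr
    simpa using this
  | succ N ih =>
    intro c hc a b d hdet α hirr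
    by_cases hc0 : c = 0
    · subst hc0
      simp only [mul_zero, sub_zero] at hdet
      simpa using base a b d hdet α hirr
    · -- Euclidean step
      set q : ℤ := a / c with hq
      set r : ℤ := a % c with hr
      have har : a = c * q + r := by rw [hq, hr]; exact (Int.mul_ediv_add_emod a c).symm
      have hrlt : r.natAbs < c.natAbs := by
        have h1 : 0 ≤ r := Int.emod_nonneg a hc0
        have h2 : r < |c| := by rw [Int.abs_eq_natAbs]; exact Int.emod_lt a hc0
        rw [Int.abs_eq_natAbs] at h2
        omega
      set b' : ℤ := b - q * d with hb'
      -- determinant of the swapped matrix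
      have hdet' : c * b' - d * r = 1 ∨ c * b' - d * r = -1 := by
        have : c * b' - d * r = -(a * d - b * c) := by rw [hb', har]; ring
        omega
      have hdet2 : r * d - b' * c ≠ 0 := by
        have : r * d - b' * c = a * d - b * c := by rw [hb', har]; ring
        omega
      have hirr2 : Irrational (((r:ℝ) * α + b') / ((c:ℝ) * α + d)) :=
        moebius_irrational hirr hdet2
      set δ : ℝ := ((r:ℝ) * α + b') / ((c:ℝ) * α + d) with hδ
      have hih : TailEq (((c:ℝ) * α + d) / ((r:ℝ) * α + b')) α :=
        ih r (by omega) c d b' hdet' α hirr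
      have hinvδ : δ⁻¹ = ((c:ℝ) * α + d) / ((r:ℝ) * α + b') := by
        rw [hδ, inv_div]
      have t1 : TailEq δ α :=
        tailEq_trans (tailEq_symm (tailEq_inv δ hirr2)) (hinvδ ▸ hih)
      -- β = δ + q
      have hden : (c:ℝ) * α + d ≠ 0 := by
        apply moebius_denom_ne_zero hirr
        rintro ⟨h1, _⟩; exact hc0 h1
      have hβ : ((a:ℝ) * α + b) / ((c:ℝ) * α + d) = δ + (q:ℤ) := by
        rw [hδ]
        rw [div_add' _ _ _ hden]
        congr 1
        have : (a:ℝ) = (c:ℝ) * (q:ℝ) + (r:ℝ) := by exact_mod_cast congrArg (Int.cast : ℤ → ℝ) har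
        rw [hb']
        push_cast
        rw [this]
        ring
      rw [hβ]
      exact tailEq_trans (tailEq_add_int δ q) t1

/-- A shifted-orbit infinitude transfer. -/
lemma period_subset_of_tailEq {α β : ℝ} (h : TailEq β α) : gaussPeriod β ⊆ gaussPeriod α := by
  obtain ⟨m, n, hmn⟩ := h
  intro y hy
  have hy' : {k : ℕ | gaussMap^[k] (Int.fract β) = y}.Infinite := hy
  have hsub : {k : ℕ | gaussMap^[k] (Int.fract β) = y} \ Set.Iio m ⊆
      {k : ℕ | gaussMap^[k] (Int.fract β) = y} := Set.diff_subset
  have hinf : ({k : ℕ | gaussMap^[k] (Int.fract β) = y} \ Set.Iio m).Infinite :=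
    hy'.diff (Set.finite_Iio m)
  have hmap : ∀ k ∈ {k : ℕ | gaussMap^[k] (Int.fract β) = y} \ Set.Iio m,
      gaussMap^[k - m + n] (Int.fract α) = y := by
    rintro k ⟨hk1, hk2⟩
    simp only [Set.mem_Iio, not_lt] at hk2
    have : k = (k - m) + m := by omega
    rw [this] at hk1
    simp only [Set.mem_setOf_eq] at hk1
    rw [Function.iterate_add_apply] at hk1
    rw [hmn] at hk1
    rw [← Function.iterate_add_apply] at hk1
    exact hk1
  have hinj : Set.InjOn (fun k => k - m + n) ({k : ℕ | gaussMap^[k] (Int.fract β) = y} \ Set.Iio m) := by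
    rintro k1 ⟨_, h1⟩ k2 ⟨_, h2⟩ he
    simp only [Set.mem_Iio, not_lt] at h1 h2
    simp only at he
    omega
  have himg : ((fun k => k - m + n) '' ({k : ℕ | gaussMap^[k] (Int.fract β) = y} \ Set.Iio m)).Infinite :=
    hinf.image hinj
  apply himg.mono
  rintro j ⟨k, hk, rfl⟩
  exact hmap k hk

lemma period_eq_of_tailEq {α β : ℝ} (h : TailEq β α) : gaussPeriod β = gaussPeriod α :=
  Set.Subset.antisymm (period_subset_of_tailEq h) (period_subset_of_tailEq (tailEq_symm h))

theorem stmt_13 (α : ℝ) (hirr : Irrational α)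
    (a b c : ℤ) (ha : a ≠ 0)
    (hq : (a : ℝ) * α ^ 2 + (b : ℝ) * α + (c : ℝ) = 0)
    (M : Matrix (Fin 2) (Fin 2) ℤ) (hM : M.det = 1 ∨ M.det = -1) :
    ∀ β : ℝ, β = ((M 0 0 : ℝ) * α + (M 0 1 : ℝ)) / ((M 1 0 : ℝ) * α + (M 1 1 : ℝ)) →
      gaussPeriod β = gaussPeriod α ∧
      (gaussPeriod β).ncard = (gaussPeriod α).ncard := by
  intro β hβ
  have hdet : M 0 0 * M 1 1 - M 0 1 * M 1 0 = 1 ∨ M 0 0 * M 1 1 - M 0 1 * M 1 0 = -1 := by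
    rw [Matrix.det_fin_two] at hM
    exact hM
  have ht : TailEq β α := by
    rw [hβ]
    exact tailEq_moebius (M 1 0).natAbs (M 1 0) le_rfl (M 0 0) (M 0 1) (M 1 1) hdet α hirr
  have := period_eq_of_tailEq ht
  exact ⟨this, by rw [this]⟩
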